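/- For 0 ≤ θ < π/2 let f : [0,∞) → ℝ be C¹ with f = 0 and f' = 0 exactly on [0, R₋], f' ≥ 0, f(r) = r for r ≥ R₊, and r ↦ f(r)/r nondecreasing. Set f_θ := f·tanθ, α(r) := 1 + i f_θ'(r), β(r) := 1 + i f_θ(r)/r, and let D(r) := diag(β²/α, α, α) and H the spherical-coordinate rotation matrix (an orthogonal matrix). Then for every ε > 0 there exists c > 0 such that for all ε ≤ θ ≤ π/2 − ε, all r > 0, and all ξ ∈ ℂ³: Re(ξ* H D(r) Hᵀ ξ) ≥ c|ξ|² and Re(ξ* (H D(r) Hᵀ)⁻¹ ξ) ≥ c|ξ|²; moreover |ξ* H D(r) Hᵀ ζ| ≤ C|ξ||ζ| for a constant C depending only on ε. -/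

import Mathlib

/- STATEMENT 19: uniform coercivity and boundedness of the radial-PML Maxwell
coefficient matrix M = H D(r) Hᵀ with D(r) = diag(β²/α, α, α), α = 1 + i f_θ'(r),
β = 1 + i f_θ(r)/r, f_θ = f tanθ, and H the spherical-coordinate rotation matrix. -/

open Real Matrix

noncomputable def pmlAlpha (f : ℝ → ℝ) (θ r : ℝ) : ℂ :=
  1 + Complex.I * (Real.tan θ * deriv f r)

noncomputable def pmlBeta (f : ℝ → ℝ) (θ r : ℝ) : ℂ :=
  1 + Complex.I * (Real.tan θ * f r / r)

noncomputable def sphericalH (φ ϕ : ℝ) : Matrix (Fin 3) (Fin 3) ℝ :=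
  !![Real.sin φ * Real.cos ϕ, Real.cos φ * Real.cos ϕ, -Real.sin ϕ;
     Real.sin φ * Real.sin ϕ, Real.cos φ * Real.sin ϕ, Real.cos ϕ;
     Real.cos φ, -Real.sin φ, 0]

noncomputable def pmlD (f : ℝ → ℝ) (θ r : ℝ) : Matrix (Fin 3) (Fin 3) ℂ :=
  Matrix.diagonal ![pmlBeta f θ r ^ 2 * (pmlAlpha f θ r)⁻¹, pmlAlpha f θ r, pmlAlpha f θ r]

noncomputable def pmlM (f : ℝ → ℝ) (θ r φ ϕ : ℝ) : Matrix (Fin 3) (Fin 3) ℂ :=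
  ((sphericalH φ ϕ).map (fun x : ℝ => (x : ℂ))) * pmlD f θ r *
    (((sphericalH φ ϕ).transpose).map (fun x : ℝ => (x : ℂ)))

/-! ### Auxiliary lemmas -/

lemma sphericalH_mul_transpose (φ ϕ : ℝ) : sphericalH φ ϕ * (sphericalH φ ϕ)ᵀ = 1 := by
  have h1 := sin_sq_add_cos_sq φ
  have h2 := sin_sq_add_cos_sq ϕ
  ext i j
  fin_cases i <;> fin_cases j <;>
    simp [sphericalH, Matrix.mul_apply, Fin.sum_univ_three, Matrix.one_apply,
      Matrix.transpose_apply, Matrix.vecHead, Matrix.vecTail] <;>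
    first
      | nlinarith
      | linear_combination (Real.sin ϕ * Real.cos ϕ) * h1
      | linear_combination (Real.sin φ * Real.cos φ) * h2

lemma transpose_mul_sphericalH (φ ϕ : ℝ) : (sphericalH φ ϕ)ᵀ * sphericalH φ ϕ = 1 := by
  have h1 := sin_sq_add_cos_sq φ
  have h2 := sin_sq_add_cos_sq ϕ
  ext i j
  fin_cases i <;> fin_cases j <;>
    simp [sphericalH, Matrix.mul_apply, Fin.sum_univ_three, Matrix.one_apply,
      Matrix.transpose_apply, Matrix.vecHead, Matrix.vecTail] <;>
    first
      | nlinarith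
      | linear_combination (Real.sin ϕ * Real.cos ϕ) * h1
      | linear_combination (Real.sin φ * Real.cos φ) * h2

lemma pml_quad (H : Matrix (Fin 3) (Fin 3) ℝ) (d : Fin 3 → ℂ) (ξ ζ : Fin 3 → ℂ) :
    star ξ ⬝ᵥ ((H.map (fun x : ℝ => (x : ℂ))) * Matrix.diagonal d *
        ((Hᵀ).map (fun x : ℝ => (x : ℂ)))).mulVec ζ
      = ∑ j, d j * (starRingEnd ℂ) (((Hᵀ).map (fun x : ℝ => (x : ℂ))).mulVec ξ j)
          * (((Hᵀ).map (fun x : ℝ => (x : ℂ))).mulVec ζ j) := by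
  simp [Matrix.mulVec, Matrix.mul_apply, dotProduct, Fin.sum_univ_three,
    Matrix.diagonal, Matrix.map_apply, Matrix.transpose_apply, Pi.star_apply, Complex.star_def,
    map_sum, _root_.map_mul, mul_comm, mul_left_comm, mul_assoc]
  ring

lemma pml_map_mul_map (H K : Matrix (Fin 3) (Fin 3) ℝ) :
    (H.map (fun x : ℝ => (x : ℂ))) * (K.map (fun x : ℝ => (x : ℂ)))
      = (H * K).map (fun x : ℝ => (x : ℂ)) := by
  have : (fun x : ℝ => (x : ℂ)) = ⇑Complex.ofRealHom := rfl
  rw [this, Matrix.map_mul]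

lemma pml_map_one : ((1 : Matrix (Fin 3) (Fin 3) ℝ).map (fun x : ℝ => (x : ℂ))) = 1 :=
  Matrix.map_one _ (by simp) (by simp)

lemma pml_re_term (w z : ℂ) : (w * (starRingEnd ℂ) z * z).re = w.re * ‖z‖ ^ 2 := by
  rw [mul_assoc, mul_comm ((starRingEnd ℂ) z), Complex.mul_conj]
  simp [Complex.normSq_eq_norm_sq, ← Complex.ofReal_pow]

lemma pml_norm_pres (H : Matrix (Fin 3) (Fin 3) ℝ) (hH : H * Hᵀ = 1) (ξ : Fin 3 → ℂ) :
    ∑ j, ‖((Hᵀ).map (fun x : ℝ => (x : ℂ))).mulVec ξ j‖ ^ 2 = ∑ i, ‖ξ i‖ ^ 2 := by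
  have h1 := pml_quad H (fun _ => (1 : ℂ)) ξ ξ
  rw [show Matrix.diagonal (fun _ : Fin 3 => (1 : ℂ)) = 1 from Matrix.diagonal_one,
    mul_one, pml_map_mul_map, hH, pml_map_one, Matrix.one_mulVec] at h1
  have h2 := congrArg Complex.re h1
  simp only [dotProduct, Pi.star_apply, one_mul, Complex.re_sum] at h2
  have e : ∀ z : ℂ, ((starRingEnd ℂ) z * z).re = ‖z‖ ^ 2 := by
    intro z
    rw [mul_comm, Complex.mul_conj]
    simp [Complex.normSq_eq_norm_sq, ← Complex.ofReal_pow]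
  simp only [Complex.star_def] at h2
  calc ∑ j, ‖((Hᵀ).map (fun x : ℝ => (x : ℂ))).mulVec ξ j‖ ^ 2
      = ∑ j, ((starRingEnd ℂ) (((Hᵀ).map (fun x : ℝ => (x : ℂ))).mulVec ξ j)
          * ((Hᵀ).map (fun x : ℝ => (x : ℂ))).mulVec ξ j).re := by simp [e]
    _ = ∑ i, ‖ξ i‖ ^ 2 := by rw [← h2]; simp [e]

lemma pml_re1 (a b : ℝ) :
    ((1 + Complex.I * b) ^ 2 * (1 + Complex.I * a)⁻¹).re
      = (1 - b ^ 2 + 2 * a * b) / (1 + a ^ 2) := by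
  have ha : (1 : ℝ) + a ^ 2 ≠ 0 := by positivity
  rw [Complex.mul_re, Complex.inv_re, Complex.inv_im]
  simp [Complex.normSq_apply, pow_two, Complex.mul_re, Complex.mul_im]
  field_simp
  ring

lemma pml_re2 (a b : ℝ) :
    ((1 + Complex.I * a) * ((1 + Complex.I * b) ^ 2)⁻¹).re
      = (1 - b ^ 2 + 2 * a * b) / ((1 + b ^ 2) ^ 2) := by
  have hb : (1 : ℝ) + b ^ 2 ≠ 0 := by positivity
  rw [Complex.mul_re, Complex.inv_re, Complex.inv_im]
  simp [Complex.normSq_apply, pow_two, Complex.mul_re, Complex.mul_im]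
  field_simp
  have hden : (1 - b ^ 2) ^ 2 + b ^ 2 * (1 + 1) ^ 2 = (1 + b ^ 2) ^ 2 := by ring
  rw [hden, mul_div_assoc, div_self (pow_ne_zero 2 hb)]
  ring

lemma pml_re3 (a : ℝ) : ((1 + Complex.I * a)⁻¹).re = 1 / (1 + a ^ 2) := by
  rw [Complex.inv_re]
  simp [Complex.normSq_apply, pow_two]

section
variable {a b M : ℝ} (hb0 : 0 ≤ b) (hba : b ≤ a) (haM : a ≤ M) (hM1 : 1 ≤ M)

include hb0 hba haM hM1 in
lemma pml_c0 : (1 + M ^ 2)⁻¹ ≤ ((1 + Complex.I * b) ^ 2 * (1 + Complex.I * a)⁻¹).re := by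
  rw [pml_re1, inv_eq_one_div, div_le_div_iff₀ (by positivity) (by positivity)]
  nlinarith [mul_nonneg hb0 (sub_nonneg.2 hba), sq_nonneg b, sq_nonneg M,
    mul_nonneg (mul_nonneg hb0 hb0) (mul_nonneg (le_trans hb0 (le_trans hba haM)) (le_trans hb0 (le_trans hba haM))),
    mul_nonneg (mul_nonneg hb0 (sub_nonneg.2 hba)) (sq_nonneg M)]

include hM1 in
lemma pml_c1 : (1 + M ^ 2)⁻¹ ≤ ((1 : ℂ) + Complex.I * (a:ℝ)).re := by
  have h : ((1 : ℂ) + Complex.I * (a:ℝ)).re = 1 := by simp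
  rw [h, inv_le_one_iff₀]; right; nlinarith

include hb0 hba haM hM1 in
lemma pml_c2 : (1 + M ^ 2)⁻¹ ≤ ((1 + Complex.I * a) * ((1 + Complex.I * b) ^ 2)⁻¹).re := by
  have hbM : b ≤ M := le_trans hba haM
  have hb2M2 : b ^ 2 ≤ M ^ 2 := by nlinarith
  rw [pml_re2, inv_eq_one_div, div_le_div_iff₀ (by positivity) (by positivity)]
  nlinarith [mul_nonneg (show (0:ℝ) ≤ 1 + b ^ 2 by positivity) (sub_nonneg.2 hb2M2),
    mul_nonneg (mul_nonneg hb0 (sub_nonneg.2 hba)) (show (0:ℝ) ≤ 1 + M ^ 2 by positivity)]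

include hb0 hba haM hM1 in
lemma pml_c3 : (1 + M ^ 2)⁻¹ ≤ (((1 : ℂ) + Complex.I * (a:ℝ))⁻¹).re := by
  have ha0 : 0 ≤ a := le_trans hb0 hba
  rw [pml_re3, inv_eq_one_div, div_le_div_iff₀ (by positivity) (by positivity)]
  nlinarith
end

lemma pml_absq (b : ℝ) : ‖1 + Complex.I * (b : ℂ)‖ ^ 2 = 1 + b ^ 2 := by
  rw [Complex.sq_norm, Complex.normSq_apply]
  simp
  ring

lemma pml_nrm2 (a : ℝ) (ha : 0 ≤ a) : ‖1 + Complex.I * a‖ ≤ 1 + a := by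
  have h := pml_absq a
  have h1 : (0 : ℝ) ≤ 1 + a := by linarith
  nlinarith [norm_nonneg (1 + Complex.I * (a : ℂ))]

lemma pml_nrm_ge (a : ℝ) : (1 : ℝ) ≤ ‖1 + Complex.I * (a : ℂ)‖ := by
  have h := pml_absq a
  nlinarith [norm_nonneg (1 + Complex.I * (a : ℂ)), sq_nonneg a]

lemma pml_nrm1 (a b : ℝ) :
    ‖(1 + Complex.I * b) ^ 2 * (1 + Complex.I * a)⁻¹‖ ≤ 1 + b ^ 2 := by
  rw [norm_mul, norm_pow, norm_inv, pml_absq b]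
  have h1 := pml_nrm_ge a
  have h2 : ‖(1 + Complex.I * (a : ℂ))‖⁻¹ ≤ 1 := by
    rw [inv_le_one_iff₀]; right; exact h1
  have h3 : (0 : ℝ) ≤ 1 + b ^ 2 := by positivity
  nlinarith

lemma pml_n0 (a b M : ℝ) (hb0 : 0 ≤ b) (hbM : b ≤ M) :
    ‖(1 + Complex.I * b) ^ 2 * (1 + Complex.I * (a:ℝ))⁻¹‖ ≤ (1 + M) ^ 2 := by
  have h := pml_nrm1 a b
  nlinarith

lemma pml_n1 (a M : ℝ) (ha0 : 0 ≤ a) (haM : a ≤ M) :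
    ‖(1 : ℂ) + Complex.I * (a:ℝ)‖ ≤ (1 + M) ^ 2 := by
  have h := pml_nrm2 a ha0
  nlinarith


theorem stmt19
    (Rminus Rplus : ℝ) (hR : 0 < Rminus) (hRR : Rminus < Rplus)
    (f : ℝ → ℝ) (hC1 : ContDiffOn ℝ 1 f (Set.Ici 0))
    (hzero : ∀ r : ℝ, 0 ≤ r → (f r = 0 ↔ r ≤ Rminus))
    (hdzero : ∀ r : ℝ, 0 ≤ r → (deriv f r = 0 ↔ r ≤ Rminus))
    (hmono : ∀ r : ℝ, 0 ≤ r → 0 ≤ deriv f r)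
    (hlin : ∀ r : ℝ, Rplus ≤ r → f r = r)
    (hnd : ∀ r s : ℝ, 0 < r → r ≤ s → f r / r ≤ f s / s) :
    ∀ ε > 0, ∃ c > 0, ∃ C > 0, ∀ θ : ℝ, ε ≤ θ → θ ≤ π / 2 - ε →
      ∀ r : ℝ, 0 < r → ∀ φ ϕ : ℝ, ∀ ξ ζ : Fin 3 → ℂ,
        c * ∑ i, ‖ξ i‖ ^ 2 ≤ (star ξ ⬝ᵥ (pmlM f θ r φ ϕ).mulVec ξ).re ∧
        c * ∑ i, ‖ξ i‖ ^ 2 ≤ (star ξ ⬝ᵥ ((pmlM f θ r φ ϕ)⁻¹).mulVec ξ).re ∧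
        ‖star ξ ⬝ᵥ (pmlM f θ r φ ϕ).mulVec ζ‖ ≤
          C * Real.sqrt (∑ i, ‖ξ i‖ ^ 2) * Real.sqrt (∑ i, ‖ζ i‖ ^ 2) := by
  -- basic differentiability facts
  have hdiffAt : ∀ r : ℝ, 0 < r → DifferentiableAt ℝ f r := fun r hr =>
    ((hC1.differentiableOn one_ne_zero).differentiableAt (Ici_mem_nhds hr))
  -- f r / r ≤ f' r
  have hkey : ∀ r : ℝ, 0 < r → f r / r ≤ deriv f r := by
    intro r hr
    have hd : HasDerivAt f (deriv f r) r := (hdiffAt r hr).hasDerivAt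
    have hg : HasDerivAt (fun s => f s - f r / r * s) (deriv f r - f r / r) r := by
      exact (hd.sub ((hasDerivAt_id r).const_mul (f r / r))).congr_deriv (by simp)
    rw [hasDerivAt_iff_tendsto_slope] at hg
    have hge : 0 ≤ deriv f r - f r / r := by
      refine ge_of_tendsto hg ?_
      filter_upwards [self_mem_nhdsWithin,
        mem_nhdsWithin_of_mem_nhds (Ioi_mem_nhds hr)] with s hs hs'
      have hs0 : (0 : ℝ) < s := hs'
      have hgr : f r - f r / r * r = 0 := by field_simp; ring
      rcases lt_or_gt_of_ne (hs : s ≠ r) with hlt | hgt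
      · have h1 : f s / s ≤ f r / r := hnd s r hs0 hlt.le
        have h2 : f s ≤ f r / r * s := by
          calc f s = f s / s * s := by field_simp
            _ ≤ f r / r * s := mul_le_mul_of_nonneg_right h1 hs0.le
        rw [slope_def_field]
        apply div_nonneg_of_nonpos <;> simp <;> linarith
      · have h1 : f r / r ≤ f s / s := hnd r s hr hgt.le
        have h2 : f r / r * s ≤ f s := by
          calc f r / r * s ≤ f s / s * s := mul_le_mul_of_nonneg_right h1 hs0.le
            _ = f s := by field_simp
        rw [slope_def_field]
        apply div_nonneg <;> simp <;> linarith
    linarith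
  -- f' = 1 beyond Rplus
  have hderiv_one : ∀ r : ℝ, Rplus < r → deriv f r = 1 := by
    intro r hrp
    have hev : f =ᶠ[nhds r] id := by
      filter_upwards [Ioi_mem_nhds hrp] with x hx
      exact hlin x (le_of_lt hx)
    rw [hev.deriv_eq, deriv_id]
  -- continuity of f' on the compact middle zone
  have hcontDeriv : ContinuousOn (deriv f) (Set.Icc Rminus Rplus) := by
    have h1 : ContinuousOn (derivWithin f (Set.Ici 0)) (Set.Ici 0) :=
      hC1.continuousOn_derivWithin (uniqueDiffOn_Ici 0) le_rfl
    have hsub : Set.Icc Rminus Rplus ⊆ Set.Ici 0 := fun x hx => le_trans hR.le hx.1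
    refine (h1.mono hsub).congr ?_
    intro x hx
    exact (derivWithin_of_mem_nhds (Ici_mem_nhds (lt_of_lt_of_le hR hx.1))).symm
  -- f ≥ 0
  have hf_nonneg : ∀ r : ℝ, 0 ≤ r → 0 ≤ f r := by
    intro r hr
    have hm : MonotoneOn f (Set.Ici 0) := by
      refine monotoneOn_of_deriv_nonneg (convex_Ici 0) hC1.continuousOn ?_ ?_
      · intro x hx
        rw [interior_Ici] at hx
        exact (hdiffAt x hx).differentiableWithinAt
      · intro x hx
        rw [interior_Ici] at hx
        exact hmono x hx.le
    have h0 : f 0 = 0 := (hzero 0 le_rfl).2 hR.le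
    calc (0 : ℝ) = f 0 := h0.symm
      _ ≤ f r := hm Set.self_mem_Ici hr hr
  -- f r / r ≤ 1
  have hratio : ∀ r : ℝ, 0 < r → f r / r ≤ 1 := by
    intro r hr
    rcases le_or_gt Rplus r with h | h
    · rw [hlin r h, div_self hr.ne']
    · have := hnd r Rplus hr h.le
      rwa [hlin Rplus le_rfl, div_self (lt_trans hR hRR).ne'] at this
  intro ε hε
  -- bound A on f'
  obtain ⟨x₀, hx₀, hKmax⟩ := isCompact_Icc.exists_isMaxOn
    ⟨Rminus, Set.left_mem_Icc.2 hRR.le⟩ hcontDeriv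
  set A : ℝ := max (deriv f x₀) 1 with hAdef
  have hA1 : (1 : ℝ) ≤ A := le_max_right _ _
  have hA : ∀ r : ℝ, 0 < r → deriv f r ≤ A := by
    intro r hr
    rcases le_or_gt r Rminus with h | h
    · rw [(hdzero r hr.le).2 h]; linarith
    rcases le_or_gt r Rplus with h2 | h2
    · exact le_trans (hKmax ⟨h.le, h2⟩) (le_max_left _ _)
    · rw [hderiv_one r h2]; exact hA1
  set T : ℝ := |Real.tan (π / 2 - ε)| + 1 with hTdef
  have hT1 : (1 : ℝ) ≤ T := by
    have := abs_nonneg (Real.tan (π / 2 - ε))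
    rw [hTdef]; linarith
  set M : ℝ := T * A with hMdef
  have hM1 : (1 : ℝ) ≤ M := by nlinarith
  have hM0 : (0 : ℝ) ≤ M := by linarith
  refine ⟨(1 + M ^ 2)⁻¹, by positivity, (1 + M) ^ 2, by positivity, ?_⟩
  intro θ hθ1 hθ2 r hr φ ϕ ξ ζ
  have hπ := Real.pi_pos
  have hθpos : 0 < θ := lt_of_lt_of_le hε hθ1
  have hθlt : θ < π / 2 := by linarith
  have htan0 : 0 ≤ Real.tan θ := Real.tan_nonneg_of_nonneg_of_le_pi_div_two hθpos.le hθlt.le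
  have htanT : Real.tan θ ≤ T := by
    have hmem1 : θ ∈ Set.Ioo (-(π / 2)) (π / 2) := ⟨by linarith, hθlt⟩
    have hmem2 : π / 2 - ε ∈ Set.Ioo (-(π / 2)) (π / 2) := ⟨by linarith, by linarith⟩
    have h1 : Real.tan θ ≤ Real.tan (π / 2 - ε) :=
      Real.strictMonoOn_tan.monotoneOn hmem1 hmem2 hθ2
    calc Real.tan θ ≤ Real.tan (π / 2 - ε) := h1
      _ ≤ |Real.tan (π / 2 - ε)| := le_abs_self _
      _ ≤ T := by rw [hTdef]; linarith
  set t : ℝ := Real.tan θ with htdef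
  set a : ℝ := t * deriv f r with hadef
  set b : ℝ := t * (f r / r) with hbdef
  have hαeq : pmlAlpha f θ r = 1 + Complex.I * (a : ℂ) := by
    unfold pmlAlpha; rw [hadef, htdef]; push_cast [← Complex.ofReal_tan]; ring
  have hβeq : pmlBeta f θ r = 1 + Complex.I * (b : ℂ) := by
    unfold pmlBeta; rw [hbdef, htdef]; push_cast [← Complex.ofReal_tan]; ring
  have hb0 : 0 ≤ b := mul_nonneg htan0 (div_nonneg (hf_nonneg r hr.le) hr.le)
  have hba : b ≤ a := mul_le_mul_of_nonneg_left (hkey r hr) htan0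
  have ha0 : 0 ≤ a := le_trans hb0 hba
  have haM : a ≤ M := by
    rw [hadef, hMdef]
    exact mul_le_mul htanT (hA r hr) (hmono r hr.le) (by linarith)
  have hbM : b ≤ M := le_trans hba haM
  -- nonvanishing
  have hαne : (1 + Complex.I * (a : ℂ)) ≠ 0 := by
    intro h
    have := congrArg Complex.re h
    simp at this
  have hβne : (1 + Complex.I * (b : ℂ)) ≠ 0 := by
    intro h
    have := congrArg Complex.re h
    simp at this
  -- scalar real part bounds
  have hc0 := pml_c0 hb0 hba haM hM1
  have hc1 := pml_c1 (a := a) (M := M) hM1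
  have hc2 := pml_c2 hb0 hba haM hM1
  have hc3 := pml_c3 hb0 hba haM hM1
  have hn0 := pml_n0 a b M hb0 hbM
  have hn1 := pml_n1 a M ha0 haM
  -- matrix identities
  have hHH := sphericalH_mul_transpose φ ϕ
  have hHtH := transpose_mul_sphericalH φ ϕ
  set d : Fin 3 → ℂ :=
    ![pmlBeta f θ r ^ 2 * (pmlAlpha f θ r)⁻¹, pmlAlpha f θ r, pmlAlpha f θ r] with hddef
  set d' : Fin 3 → ℂ :=
    ![pmlAlpha f θ r * (pmlBeta f θ r ^ 2)⁻¹, (pmlAlpha f θ r)⁻¹, (pmlAlpha f θ r)⁻¹] with hd'def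
  have hMdec : pmlM f θ r φ ϕ
      = ((sphericalH φ ϕ).map (fun x : ℝ => (x : ℂ))) * Matrix.diagonal d *
        (((sphericalH φ ϕ)ᵀ).map (fun x : ℝ => (x : ℂ))) := rfl
  have hDD' : Matrix.diagonal d * Matrix.diagonal d' = 1 := by
    rw [Matrix.diagonal_mul_diagonal]
    have h : (fun i => d i * d' i) = fun _ : Fin 3 => (1 : ℂ) := by
      funext j
      fin_cases j <;>
        simp only [hddef, hd'def, hαeq, hβeq, Matrix.cons_val_zero, Matrix.cons_val_one,
          Matrix.head_cons, Matrix.cons_val_two, Matrix.tail_cons] <;>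
        field_simp <;> simp [hαne, hβne] <;> field_simp
    rw [h, show Matrix.diagonal (fun _ : Fin 3 => (1 : ℂ)) = 1 from Matrix.diagonal_one]
  have hMinv : (pmlM f θ r φ ϕ)⁻¹
      = ((sphericalH φ ϕ).map (fun x : ℝ => (x : ℂ))) * Matrix.diagonal d' *
        (((sphericalH φ ϕ)ᵀ).map (fun x : ℝ => (x : ℂ))) := by
    apply Matrix.inv_eq_right_inv
    rw [hMdec]
    set Hm := ((sphericalH φ ϕ).map (fun x : ℝ => (x : ℂ)))
    set Htm := (((sphericalH φ ϕ)ᵀ).map (fun x : ℝ => (x : ℂ)))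
    have h2 : Htm * Hm = 1 := by
      rw [pml_map_mul_map, hHtH, pml_map_one]
    have h3 : Hm * Htm = 1 := by
      rw [pml_map_mul_map, hHH, pml_map_one]
    calc Hm * Matrix.diagonal d * Htm * (Hm * Matrix.diagonal d' * Htm)
        = Hm * (Matrix.diagonal d * ((Htm * Hm) * (Matrix.diagonal d' * Htm))) := by
          simp only [Matrix.mul_assoc]
      _ = Hm * (Matrix.diagonal d * Matrix.diagonal d' * Htm) := by
          rw [h2, Matrix.one_mul, Matrix.mul_assoc]
      _ = Hm * Htm := by rw [hDD', Matrix.one_mul]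
      _ = 1 := h3
  -- the transformed vectors
  set η : Fin 3 → ℂ := (((sphericalH φ ϕ)ᵀ).map (fun x : ℝ => (x : ℂ))).mulVec ξ with hηdef
  set η' : Fin 3 → ℂ := (((sphericalH φ ϕ)ᵀ).map (fun x : ℝ => (x : ℂ))).mulVec ζ with hη'def
  have hηnorm : ∑ j, ‖η j‖ ^ 2 = ∑ i, ‖ξ i‖ ^ 2 := pml_norm_pres _ hHH ξ
  have hη'norm : ∑ j, ‖η' j‖ ^ 2 = ∑ i, ‖ζ i‖ ^ 2 := pml_norm_pres _ hHH ζ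
  -- entrywise bounds on d and d'
  have hdre : ∀ j, (1 + M ^ 2)⁻¹ ≤ (d j).re := by
    intro j
    fin_cases j <;> simp only [hddef, Matrix.cons_val_zero, Matrix.cons_val_one,
      Matrix.head_cons, Matrix.cons_val_two, Matrix.tail_cons, hαeq, hβeq]
    · exact hc0
    · exact hc1
    · exact hc1
  have hd're : ∀ j, (1 + M ^ 2)⁻¹ ≤ (d' j).re := by
    intro j
    fin_cases j <;> simp only [hd'def, Matrix.cons_val_zero, Matrix.cons_val_one,
      Matrix.head_cons, Matrix.cons_val_two, Matrix.tail_cons, hαeq, hβeq]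
    · exact hc2
    · exact hc3
    · exact hc3
  have hdnorm : ∀ j, ‖d j‖ ≤ (1 + M) ^ 2 := by
    intro j
    fin_cases j <;> simp only [hddef, Matrix.cons_val_zero, Matrix.cons_val_one,
      Matrix.head_cons, Matrix.cons_val_two, Matrix.tail_cons, hαeq, hβeq]
    · exact hn0
    · exact hn1
    · exact hn1
  -- coercivity for a general diagonal
  have coerc : ∀ (e : Fin 3 → ℂ), (∀ j, (1 + M ^ 2)⁻¹ ≤ (e j).re) →
      (1 + M ^ 2)⁻¹ * ∑ i, ‖ξ i‖ ^ 2
        ≤ (∑ j, e j * (starRingEnd ℂ) (η j) * η j).re := by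
    intro e he
    have h1 : (∑ j, e j * (starRingEnd ℂ) (η j) * η j).re
        = ∑ j, (e j).re * ‖η j‖ ^ 2 := by
      rw [Complex.re_sum]
      exact Finset.sum_congr rfl fun j _ => pml_re_term _ _
    rw [h1, ← hηnorm, Finset.mul_sum]
    refine Finset.sum_le_sum fun j _ => ?_
    exact mul_le_mul_of_nonneg_right (he j) (sq_nonneg _)
  refine ⟨?_, ?_, ?_⟩
  · -- coercivity of M
    have hq := pml_quad (sphericalH φ ϕ) d ξ ξ
    rw [← hMdec] at hq
    rw [hq]
    exact coerc d hdre
  · -- coercivity of M⁻¹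
    have hq := pml_quad (sphericalH φ ϕ) d' ξ ξ
    rw [← hMinv] at hq
    rw [hq]
    exact coerc d' hd're
  · -- boundedness
    have hq := pml_quad (sphericalH φ ϕ) d ξ ζ
    rw [← hMdec] at hq
    rw [hq]
    have h1 : ‖∑ j, d j * (starRingEnd ℂ) (η j) * η' j‖
        ≤ ∑ j, (1 + M) ^ 2 * (‖η j‖ * ‖η' j‖) := by
      refine le_trans (norm_sum_le _ _) (Finset.sum_le_sum fun j _ => ?_)
      rw [norm_mul, norm_mul, RCLike.norm_conj]
      exact mul_le_mul_of_nonneg_right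
        (mul_le_mul_of_nonneg_right (hdnorm j) (norm_nonneg _)) (norm_nonneg _)
        |>.trans_eq (mul_assoc _ _ _)
    have h2 : ∑ j, ‖η j‖ * ‖η' j‖
        ≤ Real.sqrt (∑ j, ‖η j‖ ^ 2) * Real.sqrt (∑ j, ‖η' j‖ ^ 2) := by
      have hcs := Finset.sum_mul_sq_le_sq_mul_sq Finset.univ
        (fun j => ‖η j‖) (fun j => ‖η' j‖)
      have hnn : 0 ≤ ∑ j, ‖η j‖ * ‖η' j‖ :=
        Finset.sum_nonneg fun j _ => mul_nonneg (norm_nonneg _) (norm_nonneg _)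
      rw [← Real.sqrt_mul (Finset.sum_nonneg fun j _ => sq_nonneg _)]
      rw [show ∑ j, ‖η j‖ * ‖η' j‖ = Real.sqrt ((∑ j, ‖η j‖ * ‖η' j‖) ^ 2) from
        (Real.sqrt_sq hnn).symm]
      exact Real.sqrt_le_sqrt hcs
    calc ‖∑ j, d j * (starRingEnd ℂ) (η j) * η' j‖
        ≤ ∑ j, (1 + M) ^ 2 * (‖η j‖ * ‖η' j‖) := h1
      _ = (1 + M) ^ 2 * ∑ j, ‖η j‖ * ‖η' j‖ := by rw [Finset.mul_sum]
      _ ≤ (1 + M) ^ 2 * (Real.sqrt (∑ j, ‖η j‖ ^ 2) * Real.sqrt (∑ j, ‖η' j‖ ^ 2)) := by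
          exact mul_le_mul_of_nonneg_left h2 (by positivity)
      _ = (1 + M) ^ 2 * Real.sqrt (∑ i, ‖ξ i‖ ^ 2) * Real.sqrt (∑ i, ‖ζ i‖ ^ 2) := by
          rw [hηnorm, hη'norm, mul_assoc]
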